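/- Let Σ be an alphabet, let x, y be strings over Σ of length n, and let p ∈ [0,1]. Let U ⊆ [n] be a random subset in which each index i ∈ [n] is included independently with probability p, and let x_U (respectively y_U) denote the subsequence of x (respectively y) obtained by keeping exactly the positions in U, in increasing order. Then E[LCS(x_U, y_U)] ≥ p² · LCS(x, y). -/

import Mathlib

/-- `LCS x y` is the maximal length of a common subsequence of the strings `x` and `y`. -/
noncomputable def LCS {α : Type*} (x y : List α) : ℕ :=
  sSup {k | ∃ s : List α, s.Sublist x ∧ s.Sublist y ∧ s.length = k}

/-- `restrict x U` is the string obtained from `x` by keeping exactly the letters whose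
positions lie in `U`, in increasing order of position. -/
def restrict {α : Type*} (x : List α) (U : Finset ℕ) : List α :=
  ((x.zipIdx.map Prod.swap).filter (fun p => decide (p.1 ∈ U))).map Prod.snd

/- Auxiliary lemmas -/

lemma aux_filter_length_eq_sum {β : Type*} (l : List β) (q : β → Bool) :
    (((l.filter q).length : ℕ) : ℝ) = (l.map (fun z => if q z then (1:ℝ) else 0)).sum := by
  induction l with
  | nil => simp
  | cons a t ih => by_cases h : q a <;> simp [List.filter_cons, h, ih, add_comm]

lemma aux_sum_swap {β γ : Type*} (l : List β) (s : Finset γ) (g : γ → β → ℝ) :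
    ∑ u ∈ s, (l.map (g u)).sum = (l.map (fun z => ∑ u ∈ s, g u z)).sum := by
  induction l with
  | nil => simp
  | cons a t ih => simp [Finset.sum_add_distrib, ih]

lemma aux_prob_pair (n : ℕ) (p : ℝ) (hp0 : 0 ≤ p) (hp1 : p ≤ 1)
    (a b : ℕ) (ha : a < n) (hb : b < n) :
    p ^ 2 ≤ ∑ U ∈ (Finset.range n).powerset,
      p ^ U.card * (1 - p) ^ (n - U.card) * (if a ∈ U ∧ b ∈ U then (1:ℝ) else 0) := by
  classical
  set T : Finset ℕ := {a, b} with hT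
  have hTsub : T ⊆ Finset.range n := by
    intro i hi
    simp [hT] at hi
    rcases hi with rfl | rfl <;> simp [ha, hb]
  have key := Finset.prod_add (fun _ : ℕ => p)
    (fun i => if i ∈ T then 0 else 1 - p) (Finset.range n)
  have hL : ∏ i ∈ Finset.range n, ((fun _ : ℕ => p) i + (if i ∈ T then 0 else 1 - p))
      = p ^ T.card := by
    have : ∀ i ∈ Finset.range n, (p + (if i ∈ T then 0 else 1 - p))
        = (if i ∈ T then p else 1) := by
      intro i _
      by_cases h : i ∈ T <;> simp [h]
    rw [Finset.prod_congr rfl this, Finset.prod_ite_mem,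
      Finset.inter_eq_right.mpr hTsub, Finset.prod_const]
  have hR : ∀ U ∈ (Finset.range n).powerset,
      (∏ i ∈ U, (fun _ : ℕ => p) i) * (∏ i ∈ Finset.range n \ U, (if i ∈ T then 0 else 1 - p))
      = p ^ U.card * (1 - p) ^ (n - U.card) * (if a ∈ U ∧ b ∈ U then (1:ℝ) else 0) := by
    intro U hU
    rw [Finset.mem_powerset] at hU
    by_cases hab : a ∈ U ∧ b ∈ U
    · have hprod : ∀ i ∈ Finset.range n \ U, (if i ∈ T then (0:ℝ) else 1 - p) = 1 - p := by
        intro i hi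
        rw [Finset.mem_sdiff] at hi
        have : i ∉ T := by
          intro hiT
          simp [hT] at hiT
          rcases hiT with rfl | rfl
          · exact hi.2 hab.1
          · exact hi.2 hab.2
        simp [this]
      rw [Finset.prod_congr rfl hprod, Finset.prod_const, Finset.prod_const,
        Finset.card_sdiff_of_subset hU, Finset.card_range]
      simp [hab]
    · have : ∃ i ∈ Finset.range n \ U, (if i ∈ T then (0:ℝ) else 1 - p) = 0 := by
        rcases not_and_or.mp hab with h | h
        · exact ⟨a, Finset.mem_sdiff.mpr ⟨Finset.mem_range.mpr ha, h⟩, by simp [hT]⟩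
        · exact ⟨b, Finset.mem_sdiff.mpr ⟨Finset.mem_range.mpr hb, h⟩, by simp [hT]⟩
      rcases this with ⟨i, hi, h0⟩
      rw [Finset.prod_eq_zero hi h0]
      simp [hab]
  rw [hL, Finset.sum_congr rfl hR] at key
  rw [← key]
  have hcard : T.card ≤ 2 := le_trans (Finset.card_insert_le _ _) (by simp)
  exact pow_le_pow_of_le_one hp0 hp1 hcard

lemma aux_map_get_sublist_restrict {α : Type*} (x : List α) (U : Finset ℕ)
    (is : List (Fin x.length)) (hp : is.Pairwise (fun i j => i.val < j.val))
    (hU : ∀ i ∈ is, (i : ℕ) ∈ U) :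
    (is.map x.get).Sublist (restrict x U) := by
  classical
  have hlen : (x.zipIdx.map Prod.swap).length = x.length := by simp
  have hp' : (is.map (Fin.cast hlen.symm)).Pairwise (fun i j => i.val < j.val) := by
    rw [List.pairwise_map]; exact hp
  have h1 := List.map_getElem_sublist hp'
  have h2 : (is.map (Fin.cast hlen.symm)).map ((x.zipIdx.map Prod.swap)[·])
      = is.map (fun i => (i.val, x.get i)) := by
    rw [List.map_map]
    apply List.map_congr_left
    intro i _
    simp
  rw [h2] at h1
  set js := is.map (fun i => (i.val, x.get i)) with hjs
  have h3 : js.filter (fun q => decide (q.1 ∈ U)) = js := by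
    apply List.filter_eq_self.mpr
    intro q hq
    rw [hjs, List.mem_map] at hq
    rcases hq with ⟨i, hi, rfl⟩
    simpa using hU i hi
  have h4 : js.Sublist ((x.zipIdx.map Prod.swap).filter (fun q => decide (q.1 ∈ U))) := by
    rw [← h3]; exact h1.filter _
  have h5 := h4.map Prod.snd
  have h6 : js.map Prod.snd = is.map x.get := by
    rw [hjs, List.map_map]; rfl
  rw [h6] at h5
  exact h5

lemma aux_zip_aligned {β γ δ : Type*} {f : β → δ} {g : γ → δ} :
    ∀ (a : List β) (b : List γ), a.map f = b.map g → ∀ z ∈ a.zip b, f z.1 = g z.2 := by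
  intro a
  induction a with
  | nil => intro b h z hz; simp at hz
  | cons x xs ih =>
    intro b h z hz
    cases b with
    | nil => simp at hz
    | cons y ys =>
      simp at h hz
      rcases hz with rfl | hz
      · exact h.1
      · exact ih ys h.2 z hz

lemma aux_LCS_restrict_ge {α : Type*} (x y : List α) (U : Finset ℕ)
    (is : List (Fin x.length)) (js : List (Fin y.length))
    (hpi : is.Pairwise (fun i j => i.val < j.val))
    (hpj : js.Pairwise (fun i j => i.val < j.val))
    (hlen : is.length = js.length)
    (halign : is.map x.get = js.map y.get) :
    ((is.zip js).filter
      (fun z => decide (((z.1 : ℕ) ∈ U) ∧ ((z.2 : ℕ) ∈ U)))).length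
      ≤ LCS (restrict x U) (restrict y U) := by
  classical
  set zs := is.zip js with hzs
  set ws := zs.filter (fun z => decide (((z.1 : ℕ) ∈ U) ∧ ((z.2 : ℕ) ∈ U))) with hws
  have hwszs : ws.Sublist zs := List.filter_sublist
  have hmemU : ∀ z ∈ ws, ((z.1 : ℕ) ∈ U) ∧ ((z.2 : ℕ) ∈ U) := by
    intro z hz
    have := List.of_mem_filter hz
    simpa using this
  have hfst : (ws.map Prod.fst).Sublist is := by
    have := hwszs.map Prod.fst
    rwa [hzs, List.map_fst_zip (le_of_eq hlen)] at this
  have hsnd : (ws.map Prod.snd).Sublist js := by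
    have := hwszs.map Prod.snd
    rwa [hzs, List.map_snd_zip (ge_of_eq hlen)] at this
  have hpfst : (ws.map Prod.fst).Pairwise (fun i j => i.val < j.val) :=
    hpi.sublist hfst
  have hpsnd : (ws.map Prod.snd).Pairwise (fun i j => i.val < j.val) :=
    hpj.sublist hsnd
  have hc1 : ((ws.map Prod.fst).map x.get).Sublist (restrict x U) := by
    apply aux_map_get_sublist_restrict x U _ hpfst
    intro i hi
    rw [List.mem_map] at hi
    rcases hi with ⟨z, hz, rfl⟩
    exact (hmemU z hz).1
  have hc2 : ((ws.map Prod.snd).map y.get).Sublist (restrict y U) := by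
    apply aux_map_get_sublist_restrict y U _ hpsnd
    intro i hi
    rw [List.mem_map] at hi
    rcases hi with ⟨z, hz, rfl⟩
    exact (hmemU z hz).2
  have hceq : (ws.map Prod.fst).map x.get = (ws.map Prod.snd).map y.get := by
    rw [List.map_map, List.map_map]
    apply List.map_congr_left
    intro z hz
    exact aux_zip_aligned is js halign z (hwszs.subset hz)
  have hbdd : BddAbove {k | ∃ s : List α, s.Sublist (restrict x U) ∧ s.Sublist (restrict y U) ∧ s.length = k} := by
    refine ⟨(restrict x U).length, ?_⟩
    rintro k ⟨s, hs1, _, rfl⟩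
    exact hs1.length_le
  have hmem : ws.length ∈ {k | ∃ s : List α, s.Sublist (restrict x U) ∧ s.Sublist (restrict y U) ∧ s.length = k} := by
    refine ⟨(ws.map Prod.fst).map x.get, hc1, hceq ▸ hc2, by simp⟩
  exact le_csSup hbdd hmem

theorem expected_LCS_restrict_ge {α : Type*}
    (n : ℕ) (x y : List α) (hx : x.length = n) (hy : y.length = n)
    (p : ℝ) (hp0 : 0 ≤ p) (hp1 : p ≤ 1) :
    p ^ 2 * (LCS x y : ℝ) ≤
      ∑ U ∈ (Finset.range n).powerset,
        p ^ U.card * (1 - p) ^ (n - U.card) * (LCS (restrict x U) (restrict y U) : ℝ) := by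
  classical
  -- get an optimal common subsequence
  have hne : Set.Nonempty {k | ∃ s : List α, s.Sublist x ∧ s.Sublist y ∧ s.length = k} :=
    ⟨0, [], List.nil_sublist _, List.nil_sublist _, rfl⟩
  have hbdd : BddAbove {k | ∃ s : List α, s.Sublist x ∧ s.Sublist y ∧ s.length = k} := by
    refine ⟨x.length, ?_⟩
    rintro k ⟨s, hs1, _, rfl⟩
    exact hs1.length_le
  obtain ⟨s, hsx, hsy, hsl⟩ := Nat.sSup_mem hne hbdd
  obtain ⟨is, hisx, hpi⟩ := List.sublist_eq_map_getElem hsx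
  obtain ⟨js, hjsy, hpj⟩ := List.sublist_eq_map_getElem hsy
  have hisl : is.length = s.length := by rw [hisx, List.length_map]
  have hjsl : js.length = s.length := by rw [hjsy, List.length_map]
  have hlen : is.length = js.length := by rw [hisl, hjsl]
  set zs := is.zip js with hzs
  have hzsl : zs.length = LCS x y := by
    rw [hzs, List.length_zip, hisl, hjsl, min_self, hsl]
    rfl
  set q : Finset ℕ → Fin x.length × Fin y.length → Bool :=
    fun U z => decide (((z.1 : ℕ) ∈ U) ∧ ((z.2 : ℕ) ∈ U)) with hq
  set w : Finset ℕ → ℝ := fun U => p ^ U.card * (1 - p) ^ (n - U.card) with hw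
  have hwnn : ∀ U, 0 ≤ w U := fun U =>
    mul_nonneg (pow_nonneg hp0 _) (pow_nonneg (by linarith) _)
  -- step 1 : per-U bound
  have step1 : ∑ U ∈ (Finset.range n).powerset, w U * ((zs.filter (q U)).length : ℝ)
      ≤ ∑ U ∈ (Finset.range n).powerset, w U * (LCS (restrict x U) (restrict y U) : ℝ) := by
    apply Finset.sum_le_sum
    intro U _
    apply mul_le_mul_of_nonneg_left _ (hwnn U)
    exact_mod_cast aux_LCS_restrict_ge x y U is js hpi hpj hlen (hisx.symm.trans hjsy)
  -- step 2 : expectation of count is ≥ p² k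
  have step2 : p ^ 2 * (LCS x y : ℝ)
      ≤ ∑ U ∈ (Finset.range n).powerset, w U * ((zs.filter (q U)).length : ℝ) := by
    have e1 : ∀ U, w U * ((zs.filter (q U)).length : ℝ)
        = (zs.map (fun z => w U * (if q U z then (1:ℝ) else 0))).sum := by
      intro U
      rw [aux_filter_length_eq_sum, List.sum_map_mul_left]
    calc p ^ 2 * (LCS x y : ℝ)
        = (zs.map (fun _ => p ^ 2)).sum := by
          rw [List.map_const', List.sum_replicate, nsmul_eq_mul, hzsl, mul_comm]
      _ ≤ (zs.map (fun z => ∑ U ∈ (Finset.range n).powerset,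
            w U * (if q U z then (1:ℝ) else 0))).sum := by
          apply List.sum_le_sum
          intro z _
          have h1 : (z.1 : ℕ) < n := by rw [← hx]; exact z.1.isLt
          have h2 : (z.2 : ℕ) < n := by rw [← hy]; exact z.2.isLt
          have := aux_prob_pair n p hp0 hp1 (z.1 : ℕ) (z.2 : ℕ) h1 h2
          refine le_trans this (le_of_eq ?_)
          apply Finset.sum_congr rfl
          intro U _
          rw [hq, hw]
          simp
      _ = ∑ U ∈ (Finset.range n).powerset, w U * ((zs.filter (q U)).length : ℝ) := by
          rw [← aux_sum_swap]
          apply Finset.sum_congr rfl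
          intro U _
          rw [e1]
  calc p ^ 2 * (LCS x y : ℝ) ≤ _ := step2
    _ ≤ _ := step1
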